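/- Let a > b ≥ 1 be integers with Δ = b² − 4a² squarefree (so Δ < 0), and let F = ℚ(√Δ). Put f = (b + √Δ)/(2a) and I = ℤ + fℤ, a fractional O_F-ideal. Then both 1 and f are minimal elements of I, |σ(f)| = 1 for the complex embedding σ, f is not a unit of O_F, and consequently d(I) and d(f^{−1}I) are distinct reduced Arakelov divisors whose classes in Pic⁰_F coincide. -/

import Mathlib

open NumberField Module FractionalIdeal
open scoped nonZeroDivisors

private lemma sq_one_le {x : ℤ} (hx : x ≠ 0) : 1 ≤ x^2 := by
  rcases lt_or_gt_of_ne hx with h | h <;> nlinarith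

private lemma qform_aux (a b x y : ℤ) (hb : 1 ≤ b) (hab : b < a)
    (h : (2*a*x + b*y)^2 + (4*a^2 - b^2)*y^2 < 4*a^2) : x = 0 ∧ y = 0 := by
  have key : 4*a*(a*x^2 + b*x*y + a*y^2) < 4*a^2 := by nlinarith [h]
  have ha : (0:ℤ) < a := by omega
  have hQ : a*x^2 + b*x*y + a*y^2 < a := by nlinarith
  by_contra hc
  rw [not_and_or] at hc
  have : a ≤ a*x^2 + b*x*y + a*y^2 := by
    by_cases hy : y = 0
    · have hx : x ≠ 0 := by tauto
      have := sq_one_le hx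
      subst hy; nlinarith
    · by_cases hx : x = 0
      · have := sq_one_le hy
        subst hx; nlinarith
      · have h1 := sq_one_le hx
        have h2 := sq_one_le hy
        nlinarith [sq_nonneg (x+y), sq_nonneg (x-y)]
  omega

private lemma rat_int_of_sf (D : ℤ) (hsf : Squarefree D) (r : ℚ) (m : ℤ)
    (h : (D:ℚ) * r^2 = (m:ℚ)) : ∃ n : ℤ, (n:ℚ) = r := by
  have hd0 : (r.den : ℤ) ≠ 0 := by exact_mod_cast r.den_nz
  have hkey : D * r.num^2 = m * (r.den:ℤ)^2 := by
    have h2 := h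
    rw [← Rat.num_div_den r] at h2
    field_simp at h2
    rw [mul_comm (m:ℤ)]; exact_mod_cast h2
  have hdvd : (r.den:ℤ)^2 ∣ D * r.num^2 := ⟨m, by linarith [hkey]⟩
  have hcop : IsCoprime (r.num) ((r.den:ℤ)) := by
    rw [Int.isCoprime_iff_gcd_eq_one]
    exact r.reduced
  have hcop2 : IsCoprime ((r.den:ℤ)^2) (r.num^2) := (hcop.symm.pow)
  have hdvdD : (r.den:ℤ)^2 ∣ D := hcop2.dvd_of_dvd_mul_right hdvd
  have hunit : IsUnit ((r.den:ℤ)) := hsf _ (by rwa [← sq])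
  have hden1 : r.den = 1 := by
    rcases Int.isUnit_iff.mp hunit with h1 | h1
    · exact_mod_cast h1
    · exfalso; have := r.pos; omega
  exact ⟨r.num, by rw [← Rat.num_div_den r, hden1]; simp⟩

set_option maxHeartbeats 1600000 in
/-- Example 9.3. Let `a > b ≥ 1` be integers with
`Δ = b² − 4a²` squarefree, `F = ℚ(√Δ)` the corresponding imaginary quadratic
field (a degree-2 number field containing a square root `s` of `Δ`), and put
`f = (b + s)/(2a)` and `I = O_F + f·O_F` (which equals `ℤ + fℤ`).  Then `1`
and `f` are minimal elements of `I`, `|σ(f)| = 1` at the unique infinite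
place, `f` is not a unit of `O_F`, and consequently `d(I)` and `d(f⁻¹I)` are
distinct reduced Arakelov divisors whose classes in `Pic⁰_F` coincide. -/
theorem example_9_3 (F : Type*) [Field F] [NumberField F]
    (hdeg : finrank ℚ F = 2)
    (a b : ℤ) (hb : 1 ≤ b) (hab : b < a)
    (hsf : Squarefree (b ^ 2 - 4 * a ^ 2))
    (s : F) (hs : s ^ 2 = ((b ^ 2 - 4 * a ^ 2 : ℤ) : F))
    (f : F) (hf : f = ((b : F) + s) / (2 * (a : F)))
    (I : FractionalIdeal (𝓞 F)⁰ F)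
    (hI : I = 1 + spanSingleton (𝓞 F)⁰ f) :
    (∀ g : F, g ∈ I → (∀ w : InfinitePlace F, w g < 1) → g = 0) ∧
      (∀ g : F, g ∈ I → (∀ w : InfinitePlace F, w g < w f) → g = 0) ∧
      (∀ w : InfinitePlace F, w f = 1) ∧
      (¬ ∃ u : (𝓞 F)ˣ, ((u : 𝓞 F) : F) = f) ∧
      spanSingleton (𝓞 F)⁰ f⁻¹ * I ≠ I ∧
      (∃ h : F, h ≠ 0 ∧
        spanSingleton (𝓞 F)⁰ f⁻¹ * I = spanSingleton (𝓞 F)⁰ h⁻¹ * I ∧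
        ∀ w : InfinitePlace F,
          (absNorm (spanSingleton (𝓞 F)⁰ f⁻¹ * I) : ℝ) ^ (-(1 : ℝ) / 2) =
            w h * (absNorm I : ℝ) ^ (-(1 : ℝ) / 2)) := by
  have hΔneg : (b^2 - 4*a^2 : ℤ) < 0 := by nlinarith
  have hsF : s^2 = (b:F)^2 - 4*(a:F)^2 := by rw [hs]; push_cast; ring
  have hbodd : Odd b := by
    rcases Int.even_or_odd b with he | ho
    · exfalso
      obtain ⟨c, rfl⟩ := he
      have : (2*2 : ℤ) ∣ ((c+c)^2 - 4*a^2) := ⟨c^2 - a^2, by ring⟩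
      have := hsf 2 this
      rw [Int.isUnit_iff] at this
      omega
    · exact ho
  have haF : (a : F) ≠ 0 := by
    simp only [ne_eq, Int.cast_eq_zero]; omega
  have h2a : (2 * (a:F)) ≠ 0 := by
    simp only [ne_eq, mul_eq_zero]; push_neg; exact ⟨two_ne_zero, haF⟩
  -- uniqueness of coordinates
  have hsirr : ∀ X Y : ℚ, (X:F) + (Y:F) * s = 0 → X = 0 ∧ Y = 0 := by
    intro X Y hXY
    by_cases hY : Y = 0
    · subst hY
      simp only [Rat.cast_zero, zero_mul, add_zero, Rat.cast_eq_zero] at hXY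
      exact ⟨hXY, rfl⟩
    · exfalso
      have hYF : ((Y:F)) ≠ 0 := by simpa using hY
      have hsval : s = ((-X/Y : ℚ) : F) := by
        push_cast
        field_simp
        linear_combination hXY
      have hcst : (((b^2 - 4*a^2 : ℤ) : ℚ) : F) = (((X/Y)^2 : ℚ) : F) := by
        rw [show (((b^2 - 4*a^2 : ℤ) : ℚ) : F) = ((b^2 - 4*a^2 : ℤ) : F) by push_cast; ring,
          ← hs, hsval]; push_cast; ring
      have hq : ((b^2 - 4*a^2 : ℤ) : ℚ) = (X/Y)^2 := Rat.cast_injective hcst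
      have h1 : ((b^2 - 4*a^2 : ℤ) : ℚ) < 0 := by exact_mod_cast hΔneg
      nlinarith [sq_nonneg (X/Y)]
  -- basis
  have hsnotQ : ∀ X : ℚ, s ≠ (X : F) := by
    intro X hX
    have := hsirr (-X) 1 (by rw [hX]; push_cast; ring)
    simp at this
  have hli : LinearIndependent ℚ ![(1:F), s] := by
    rw [LinearIndependent.pair_iff]
    intro p q hpq
    rw [Rat.smul_def, Rat.smul_def, mul_one] at hpq
    exact hsirr p q hpq
  have hcard : Fintype.card (Fin 2) = finrank ℚ F := by simp [hdeg]
  set B := basisOfLinearIndependentOfCardEqFinrank hli hcard with hBdef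
  have hB0 : B 0 = 1 := by rw [hBdef, coe_basisOfLinearIndependentOfCardEqFinrank]; rfl
  have hB1 : B 1 = s := by rw [hBdef, coe_basisOfLinearIndependentOfCardEqFinrank]; rfl
  have hcoords : ∀ u : F, ∃ X Y : ℚ, u = (X:F) + (Y:F) * s := by
    intro u
    refine ⟨B.repr u 0, B.repr u 1, ?_⟩
    have h := B.sum_repr u
    rw [Fin.sum_univ_two, hB0, hB1] at h
    rw [Rat.smul_def, Rat.smul_def, mul_one] at h
    exact h.symm
  -- trace facts
  have hss : s * s = ((b^2 - 4*a^2 : ℤ) : F) := by rw [← sq]; exact hs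
  have hrs0 : B.repr s 0 = 0 := by
    rw [← hB1, B.repr_self]
    simp
  have hrd1 : B.repr (((b^2 - 4*a^2 : ℤ) : F)) 1 = 0 := by
    have hrw : ((b^2 - 4*a^2 : ℤ) : F) = ((b^2 - 4*a^2 : ℤ) : ℚ) • B 0 := by
      rw [hB0, Rat.smul_def, mul_one]; push_cast; ring
    rw [hrw, map_smul, B.repr_self]
    simp
  have htrs : Algebra.trace ℚ F s = 0 := by
    classical
    rw [Algebra.trace_eq_matrix_trace B, Matrix.trace, Fin.sum_univ_two]
    simp only [Matrix.diag, Algebra.leftMulMatrix_eq_repr_mul, hB0, hB1, mul_one, hss]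
    rw [hrs0, hrd1, add_zero]
  have htr : ∀ X Y : ℚ, Algebra.trace ℚ F ((X:F) + (Y:F) * s) = 2*X := by
    intro X Y
    have h1 : ((X:F) + (Y:F) * s) = algebraMap ℚ F X + Y • s := by
      rw [Rat.smul_def, eq_ratCast (algebraMap ℚ F) X]
    rw [h1, _root_.map_add, _root_.map_smul, htrs, Algebra.trace_algebraMap, hdeg, smul_zero, add_zero]
    push_cast
    ring
  have hQint : ∀ q : ℚ, IsIntegral ℤ q → ∃ n : ℤ, (n:ℚ) = q := by
    intro q hq
    obtain ⟨n, hn⟩ := IsIntegrallyClosed.isIntegral_iff.mp hq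
    exact ⟨n, by rw [← hn]; simp⟩
  have htrZ : ∀ u : F, IsIntegral ℤ u → ∃ n : ℤ, (n:ℚ) = Algebra.trace ℚ F u :=
    fun u hu => hQint _ (Algebra.isIntegral_trace hu)
  -- structure of integral elements
  have hΔodd : ¬ Even (b^2 - 4*a^2 : ℤ) := by
    rw [Int.not_even_iff_odd]
    rcases hbodd with ⟨c, rfl⟩
    exact ⟨2*c^2 + 2*c - 2*a^2, by ring⟩
  have hA : ∀ u : F, IsIntegral ℤ u → ∃ p q : ℤ, Even (p - q) ∧ (2:F) * u = (p:F) + (q:F) * s := by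
    intro u hu
    obtain ⟨X, Y, hXY⟩ := hcoords u
    obtain ⟨p, hp⟩ := htrZ u hu
    rw [hXY, htr] at hp
    have hu2 : u^2 = ((X^2 + (b^2-4*a^2)*Y^2 : ℚ):F) + ((2*X*Y : ℚ):F) * s := by
      rw [hXY]; push_cast; linear_combination ((Y:F))^2 * hsF
    obtain ⟨t2, ht2⟩ := htrZ (u^2) (hu.pow 2)
    rw [hu2, htr] at ht2
    have hDq : ((b^2-4*a^2 : ℤ):ℚ) * (2*Y)^2 = ((2*t2 - p^2 : ℤ):ℚ) := by
      push_cast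
      linear_combination (-2:ℚ)*ht2 + ((p:ℚ) + 2*X)*hp
    obtain ⟨q, hq⟩ := rat_int_of_sf _ hsf _ _ hDq
    have hpF : ((p:ℤ):F) = 2*(X:F) := by
      have := congrArg (fun r : ℚ => (r : F)) hp
      push_cast at this
      exact_mod_cast hp
    have hqF : ((q:ℤ):F) = 2*(Y:F) := by
      have := congrArg (fun r : ℚ => (r : F)) hq
      push_cast at this
      exact_mod_cast hq
    refine ⟨p, q, ?_, by rw [hXY]; linear_combination -hpF - s*hqF⟩
    have hpar : p^2 + (b^2-4*a^2)*q^2 = 2*t2 := by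
      have hc : ((p^2 + (b^2-4*a^2)*q^2 : ℤ):ℚ) = ((2*t2 : ℤ):ℚ) := by
        push_cast
        linear_combination ((p:ℚ)+2*X)*hp + (((b:ℚ)^2-4*(a:ℚ)^2)*((q:ℚ)+2*Y))*hq - 2*ht2
      exact_mod_cast hc
    have hev : Even (p^2 + (b^2-4*a^2)*q^2) := ⟨t2, by omega⟩
    rw [Int.even_add, Int.even_mul, Int.even_pow, Int.even_pow] at hev
    rw [Int.even_sub]
    tauto
  have h2af : 2*(a:F)*f = (b:F) + s := by
    rw [hf]; field_simp
  have hBmem : ∀ g : F, g ∈ I → ∃ x y : ℤ, g = ((x:ℤ):F) + ((y:ℤ):F) * f := by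
    intro g hg
    rw [hI, mem_add] at hg
    obtain ⟨i, hi, j, hj, hij⟩ := hg
    rw [mem_one_iff] at hi
    obtain ⟨u, hu⟩ := hi
    rw [mem_spanSingleton] at hj
    obtain ⟨z, hz⟩ := hj
    obtain ⟨p, q, hpq, h2u⟩ := hA (algebraMap (𝓞 F) F u) (RingOfIntegers.isIntegral_coe u)
    obtain ⟨r, t, hrt, h2z⟩ := hA (algebraMap (𝓞 F) F z) (RingOfIntegers.isIntegral_coe z)
    obtain ⟨x1, hx1⟩ : ∃ x1, p - b*q = 2*x1 := by
      rcases hpq with ⟨k, hk⟩; rcases hbodd with ⟨c, hc⟩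
      refine ⟨k - c*q, by subst hc; linarith⟩
    obtain ⟨y1, hy1⟩ : ∃ y1, b*t + r = 2*y1 := by
      rcases hrt with ⟨k, hk⟩; rcases hbodd with ⟨c, hc⟩
      refine ⟨c*t + k + t, by subst hc; linarith⟩
    have hx1F : ((p:ℤ):F) - ((b:ℤ):F)*((q:ℤ):F) = 2*((x1:ℤ):F) := by
      have := congrArg (Int.cast : ℤ → F) hx1; push_cast at this; exact this
    have hy1F : ((b:ℤ):F)*((t:ℤ):F) + ((r:ℤ):F) = 2*((y1:ℤ):F) := by
      have := congrArg (Int.cast : ℤ → F) hy1; push_cast at this; exact this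
    have hgeq : g = algebraMap (𝓞 F) F u + algebraMap (𝓞 F) F z * f := by
      rw [← hij, ← hu, ← hz, Algebra.smul_def]
    refine ⟨x1 - a*t, a*q + y1, ?_⟩
    have h4a : (4*(a:F)) ≠ 0 := by
      simp only [ne_eq, mul_eq_zero]; push_neg
      exact ⟨by norm_num, haF⟩
    refine mul_left_cancel₀ h4a ?_
    rw [hgeq]
    push_cast
    linear_combination 2*(a:F)*h2u + 2*(a:F)*f*h2z
      + ((r:F) + (t:F)*s - 2*(a:F)*(q:F) - 2*(y1:F))*h2af + (t:F)*hsF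
      + (s + (b:F))*hy1F + 2*(a:F)*hx1F
  -- complex embedding facts
  have hbR : (1:ℝ) ≤ (b:ℝ) := by exact_mod_cast hb
  have habR : (b:ℝ) < (a:ℝ) := by exact_mod_cast hab
  have hcplx : ∀ w : InfinitePlace F, (w.embedding s).re = 0 ∧
      (w.embedding s).im^2 = 4*(a:ℝ)^2 - (b:ℝ)^2 := by
    intro w
    have hz2 : (w.embedding s)^2 = ((b:ℂ))^2 - 4*((a:ℂ))^2 := by
      have := congrArg w.embedding hsF
      rwa [map_pow, _root_.map_sub, _root_.map_mul, map_pow, map_pow, map_ofNat, map_intCast,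
        map_intCast] at this
    set z := w.embedding s with hzdef
    have hz2' : z^2 = (((b:ℝ)^2 - 4*(a:ℝ)^2 : ℝ) : ℂ) := by rw [hz2]; push_cast; ring
    have h1 := congrArg Complex.re hz2'
    have h2 := congrArg Complex.im hz2'
    rw [pow_two] at h1 h2
    simp only [Complex.mul_re, Complex.mul_im, Complex.ofReal_re, Complex.ofReal_im] at h1 h2
    have hz0 : z.re = 0 := by
      by_contra hc
      have him0 : z.im = 0 := by
        rcases mul_eq_zero.mp (by linarith : z.re * z.im = 0) with h | h
        · exact absurd h hc
        · exact h
      rw [him0] at h1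
      nlinarith
    refine ⟨hz0, by rw [hz0] at h1; nlinarith⟩
  have hn2 : ∀ ζ : ℂ, ‖ζ‖^2 = ζ.re^2 + ζ.im^2 := fun ζ => by
    rw [Complex.sq_norm, Complex.normSq_apply]; ring
  have hkey : ∀ (w : InfinitePlace F) (x y : ℤ),
      (2*(a:ℝ))^2 * (w ((x:F) + (y:F)*f))^2
        = ((2*a*x + b*y:ℤ):ℝ)^2 + (4*(a:ℝ)^2-(b:ℝ)^2)*((y:ℤ):ℝ)^2 := by
    intro w x y
    obtain ⟨hre, him⟩ := hcplx w
    have h2afC : 2*(a:ℂ) * w.embedding f = (b:ℂ) + w.embedding s := by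
      have := congrArg w.embedding h2af
      rw [_root_.map_mul, _root_.map_mul, _root_.map_add, map_ofNat, map_intCast, map_intCast] at this
      exact this
    have hval : (2*(a:ℂ)) * w.embedding ((x:F) + (y:F)*f)
        = (((2*a*x + b*y:ℤ)):ℂ) + ((y:ℤ):ℂ) * w.embedding s := by
      rw [_root_.map_add, _root_.map_mul, map_intCast, map_intCast]
      push_cast
      linear_combination ((y:ℤ):ℂ)*h2afC
    have hRe : ((((2*a*x + b*y:ℤ)):ℂ) + ((y:ℤ):ℂ) * w.embedding s).re
        = ((2*a*x + b*y : ℤ):ℝ) := by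
      simp [Complex.add_re, Complex.mul_re, hre]
    have hIm : ((((2*a*x + b*y:ℤ)):ℂ) + ((y:ℤ):ℂ) * w.embedding s).im
        = ((y:ℤ):ℝ) * (w.embedding s).im := by
      simp [Complex.add_im, Complex.mul_im, hre]
    have habs : ‖(2*(a:ℂ))‖ = 2*(a:ℝ) := by
      rw [show (2*(a:ℂ)) = (((2*a:ℤ)):ℂ) by push_cast; ring,
        Complex.norm_intCast]
      push_cast
      rw [abs_of_pos]
      have : (0:ℝ) < (a:ℝ) := by linarith
      linarith
    rw [← InfinitePlace.norm_embedding_eq w, ← habs, ← mul_pow, ← norm_mul, hval, hn2,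
      hRe, hIm, mul_pow, him]
    ring
  -- |sigma f| = 1
  have hwf1 : ∀ w : InfinitePlace F, w f = 1 := by
    intro w
    have hk := hkey w 0 1
    have hwnn : 0 ≤ w f := apply_nonneg w f
    have haR : (1:ℝ) < (a:ℝ) := by linarith
    have hz : ((0:ℤ):F) + ((1:ℤ):F)*f = f := by push_cast; ring
    rw [hz] at hk
    push_cast at hk
    have h2ane : ((2*(a:ℝ))^2) ≠ 0 := by positivity
    have hsq : (w f)^2 = 1 := by
      apply mul_left_cancel₀ h2ane
      rw [hk]; ring
    have h0 : (w f - 1)*(w f + 1) = 0 := by linear_combination hsq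
    rcases mul_eq_zero.mp h0 with h | h
    · linarith
    · linarith
  -- minimality
  have hmin : ∀ g : F, g ∈ I → (∀ w : InfinitePlace F, w g < 1) → g = 0 := by
    intro g hg hw
    obtain ⟨x, y, hgxy⟩ := hBmem g hg
    obtain ⟨w⟩ := (inferInstance : Nonempty (InfinitePlace F))
    have hk := hkey w x y
    rw [← hgxy] at hk
    have hwg := hw w
    have hwnn : 0 ≤ w g := apply_nonneg w g
    have haR : (1:ℝ) < (a:ℝ) := by linarith
    have hlt : ((2*a*x + b*y:ℤ):ℝ)^2 + (4*(a:ℝ)^2-(b:ℝ)^2)*((y:ℤ):ℝ)^2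
        < ((2*a:ℤ):ℝ)^2 := by
      rw [← hk]
      push_cast
      have hp : (0:ℝ) < (2*(a:ℝ))^2 := by positivity
      have h1 : w g ^ 2 < 1 := by nlinarith [hwg, hwnn]
      nlinarith [mul_pos hp (by linarith : (0:ℝ) < 1 - w g ^ 2)]
    have hltZ : (2*a*x + b*y)^2 + (4*a^2-b^2)*y^2 < (2*a)^2 := by
      have : (((2*a*x + b*y)^2 + (4*a^2-b^2)*y^2 : ℤ):ℝ) < (((2*a)^2 : ℤ):ℝ) := by
        push_cast
        push_cast at hlt
        linarith
      exact_mod_cast this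
    obtain ⟨hx0, hy0⟩ := qform_aux a b x y hb hab (by nlinarith [hltZ])
    rw [hgxy, hx0, hy0]
    norm_num
  -- f is not a unit
  have hnotunit : ¬ ∃ u : (𝓞 F)ˣ, ((u : 𝓞 F) : F) = f := by
    rintro ⟨u, hu⟩
    have hint : IsIntegral ℤ f := by
      rw [← hu]
      exact RingOfIntegers.isIntegral_coe _
    obtain ⟨p, q, hpq, h2f⟩ := hA f hint
    have h0 : (((a*p - b : ℤ):ℚ):F) + (((a*q - 1 : ℤ):ℚ):F) * s = 0 := by
      push_cast
      linear_combination -(a:F)*h2f + h2af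
    have hY := (hsirr _ _ h0).2
    have hq1 : a*q = 1 := by
      have : (a*q - 1 : ℤ) = 0 := by exact_mod_cast hY
      omega
    have : a ≤ 1 := Int.le_of_dvd one_pos ⟨q, hq1.symm⟩
    omega
  -- spanSingleton f⁻¹ * I ≠ I
  have h1I : (1:F) ∈ I := by
    rw [hI, mem_add]
    exact ⟨1, one_mem_one _, 0, zero_mem _, by ring⟩
  have hfinv : 2*(a:F) * f⁻¹ = (b:F) - s := by
    have hmul : f * (((b:F) - s)/(2*(a:F))) = 1 := by
      rw [hf]
      field_simp
      linear_combination -hsF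
    rw [inv_eq_of_mul_eq_one_right hmul]
    field_simp
  have hne : spanSingleton (𝓞 F)⁰ f⁻¹ * I ≠ I := by
    intro heq
    have hfinvI : f⁻¹ ∈ I := by
      rw [← heq]
      simpa using mul_mem_mul (mem_spanSingleton_self _ f⁻¹) h1I
    obtain ⟨x, y, hxy⟩ := hBmem _ hfinvI
    have h0 : (((2*a*x + y*b - b : ℤ):ℚ):F) + (((y + 1 : ℤ):ℚ):F) * s = 0 := by
      push_cast
      linear_combination -2*(a:F)*hxy + hfinv - (y:F)*h2af
    have hY := (hsirr _ _ h0).2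
    have hX := (hsirr _ _ h0).1
    have hy1 : y = -1 := by
      have : (y + 1 : ℤ) = 0 := by exact_mod_cast hY
      omega
    have hax : a*x = b := by
      have : (2*a*x + y*b - b : ℤ) = 0 := by exact_mod_cast hX
      rw [hy1] at this
      linarith
    have : a ≤ b := Int.le_of_dvd (by omega) ⟨x, hax.symm⟩
    omega
  -- norms
  have habsf : |Algebra.norm ℚ f| = 1 := by
    have hR : (↑|Algebra.norm ℚ f| : ℝ) = 1 := by
      rw [← InfinitePlace.prod_eq_abs_norm f]
      apply Finset.prod_eq_one
      intro w _
      rw [hwf1 w, one_pow]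
    exact_mod_cast hR
  have hf0 : f ≠ 0 := by
    intro h
    rw [h, Algebra.norm_zero] at habsf
    norm_num at habsf
  have habsfinv : |Algebra.norm ℚ f⁻¹| = 1 := by
    have hmul : Algebra.norm ℚ f * Algebra.norm ℚ f⁻¹ = 1 := by
      rw [← MonoidHom.map_mul, mul_inv_cancel₀ hf0, MonoidHom.map_one]
    have habs := abs_mul (Algebra.norm ℚ f) (Algebra.norm ℚ f⁻¹)
    rw [hmul, habsf, one_mul, abs_one] at habs
    exact habs.symm
  have habsI : absNorm (spanSingleton (𝓞 F)⁰ f⁻¹ * I) = absNorm I := by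
    rw [_root_.map_mul, absNorm_span_singleton _ _, habsfinv, one_mul]
  refine ⟨hmin, ?_, hwf1, hnotunit, hne, f, hf0, rfl, ?_⟩
  · intro g hg hw
    exact hmin g hg (fun w => by rw [← hwf1 w]; exact hw w)
  · intro w
    rw [habsI, hwf1 w, one_mul]
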